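/- A pair (β̄, ᾱ) ∈ ℝ^p × ℝ^n is a saddle point of L if and only if the following three conditions hold: (a) β̄ minimizes P over ℝ^p; (b) ᾱ = Xβ̄ − y; (c) for every j ∈ {1,…,p}: if |η_j(ᾱ)| > η₀ then β̄_j = sign(η_j(ᾱ))·(|η_j(ᾱ)| − λ₁/(2λ₂)); if |η_j(ᾱ)| < η₀ then β̄_j = 0; and if |η_j(ᾱ)| = η₀ then β̄_j ∈ {0, sign(η_j(ᾱ))·(|η_j(ᾱ)| − λ₁/(2λ₂))}. -/

import Mathlib

noncomputable section

/-- ℓ₀ "norm": number of nonzero entries, as a real number. -/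
def zeroNorm {p : ℕ} (β : EuclideanSpace ℝ (Fin p)) : ℝ :=
  ((Finset.univ.filter fun j => β j ≠ 0).card : ℝ)

/-- ℓ₁ norm. -/
def oneNorm {p : ℕ} (β : EuclideanSpace ℝ (Fin p)) : ℝ := ∑ j, |β j|

/-- `X β`, where `x j` is the `j`-th column of `X`. -/
def Xmul {n p : ℕ} (x : Fin p → EuclideanSpace ℝ (Fin n))
    (β : EuclideanSpace ℝ (Fin p)) : EuclideanSpace ℝ (Fin n) :=
  ∑ j, β j • x j

/-- Primal objective `P(β)`. -/
def Pobj {n p : ℕ} (x : Fin p → EuclideanSpace ℝ (Fin n)) (y : EuclideanSpace ℝ (Fin n))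
    (l0 l1 l2 : ℝ) (β : EuclideanSpace ℝ (Fin p)) : ℝ :=
  (1/2) * ‖y - Xmul x β‖^2 + l0 * zeroNorm β + l1 * oneNorm β + l2 * ‖β‖^2

/-- Lagrangian `L(β, α)`. -/
def Lag {n p : ℕ} (x : Fin p → EuclideanSpace ℝ (Fin n)) (y : EuclideanSpace ℝ (Fin n))
    (l0 l1 l2 : ℝ) (β : EuclideanSpace ℝ (Fin p)) (α : EuclideanSpace ℝ (Fin n)) : ℝ :=
  (inner ℝ α (Xmul x β) : ℝ) - (1/2) * ‖α‖^2 - (inner ℝ y α : ℝ)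
    + l0 * zeroNorm β + l1 * oneNorm β + l2 * ‖β‖^2

/-- `η_j(α) = −⟨x_j, α⟩ / (2 λ₂)`. -/
def etav {n p : ℕ} (x : Fin p → EuclideanSpace ℝ (Fin n)) (l2 : ℝ)
    (α : EuclideanSpace ℝ (Fin n)) (j : Fin p) : ℝ :=
  -(inner ℝ (x j) α : ℝ) / (2 * l2)

/-- Threshold `η₀ = (2√(λ₀λ₂) + λ₁)/(2λ₂)`. -/
def eta0 (l0 l1 l2 : ℝ) : ℝ := (2 * Real.sqrt (l0 * l2) + l1) / (2 * l2)

/-- Scalar function `ψ` appearing in the dual objective. -/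
def psi (l0 l1 l2 : ℝ) (t : ℝ) : ℝ :=
  if eta0 l0 l1 l2 ≤ |t| then -l2 * (|t| - l1 / (2 * l2))^2 + l0 else 0

/-- Dual objective `D(α)` for the square loss. -/
def Dobj {n p : ℕ} (x : Fin p → EuclideanSpace ℝ (Fin n)) (y : EuclideanSpace ℝ (Fin n))
    (l0 l1 l2 : ℝ) (α : EuclideanSpace ℝ (Fin n)) : ℝ :=
  -(1/2) * ‖α‖^2 - (inner ℝ y α : ℝ) + ∑ j : Fin p, psi l0 l1 l2 (etav x l2 α j)

/-- Thresholding map `𝔅`. -/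
def Bth (l0 l1 l2 : ℝ) (t : ℝ) : ℝ :=
  if eta0 l0 l1 l2 ≤ |t| then Real.sign t * (|t| - l1 / (2 * l2)) else 0

/-- Primal-dual link `β(α)` with entries `β_j(α) = 𝔅(η_j(α))`. -/
def betaOf {n p : ℕ} (x : Fin p → EuclideanSpace ℝ (Fin n)) (l0 l1 l2 : ℝ)
    (α : EuclideanSpace ℝ (Fin n)) : EuclideanSpace ℝ (Fin p) :=
  WithLp.toLp 2 fun j => Bth l0 l1 l2 (etav x l2 α j)

/-- `(β̄, ᾱ)` is a saddle point of the Lagrangian `L`. -/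
def IsSaddle {n p : ℕ} (x : Fin p → EuclideanSpace ℝ (Fin n)) (y : EuclideanSpace ℝ (Fin n))
    (l0 l1 l2 : ℝ) (βb : EuclideanSpace ℝ (Fin p)) (αb : EuclideanSpace ℝ (Fin n)) : Prop :=
  (∀ α, Lag x y l0 l1 l2 βb α ≤ Lag x y l0 l1 l2 βb αb) ∧
  (∀ β, Lag x y l0 l1 l2 βb αb ≤ Lag x y l0 l1 l2 β αb)


def gfun (l0 l1 l2 η t : ℝ) : ℝ :=
  l2 * t^2 - 2 * l2 * η * t + l1 * |t| + (if t = 0 then 0 else l0)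

lemma gfun_zero (l0 l1 l2 η : ℝ) : gfun l0 l1 l2 η 0 = 0 := by simp [gfun]

lemma eta0_pos {l0 l1 l2 : ℝ} (hl0 : 0 < l0) (hl1 : 0 ≤ l1) (hl2 : 0 < l2) :
    0 < eta0 l0 l1 l2 := by
  have := Real.sqrt_pos.2 (mul_pos hl0 hl2)
  unfold eta0; positivity

lemma eta0_le_iff {l0 l1 l2 : ℝ} (hl2 : 0 < l2) {r : ℝ} :
    eta0 l0 l1 l2 ≤ r ↔ 2 * Real.sqrt (l0 * l2) + l1 ≤ 2 * l2 * r := by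
  rw [eta0, div_le_iff₀ (by linarith)]; constructor <;> intro h <;> nlinarith

lemma lt_eta0_iff {l0 l1 l2 : ℝ} (hl2 : 0 < l2) {r : ℝ} :
    r < eta0 l0 l1 l2 ↔ 2 * l2 * r < 2 * Real.sqrt (l0 * l2) + l1 := by
  rw [eta0, lt_div_iff₀ (by linarith)]; constructor <;> intro h <;> nlinarith

lemma sign_cases {η : ℝ} (hη : η ≠ 0) : Real.sign η = 1 ∨ Real.sign η = -1 := by
  rcases lt_trichotomy η 0 with hn | hz | hp
  · right; exact Real.sign_of_neg hn
  · exact absurd hz hη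
  · left; exact Real.sign_of_pos hp

-- basic facts when η₀ ≤ |η|
lemma eta_ne_zero {l0 l1 l2 η : ℝ} (hl0 : 0 < l0) (hl1 : 0 ≤ l1) (hl2 : 0 < l2)
    (h : eta0 l0 l1 l2 ≤ |η|) : η ≠ 0 := by
  intro h0
  have := eta0_pos hl0 hl1 hl2 (l0 := l0) (l1 := l1) (l2 := l2)
  rw [h0, abs_zero] at h; linarith

lemma u_pos {l0 l1 l2 η : ℝ} (hl0 : 0 < l0) (hl1 : 0 ≤ l1) (hl2 : 0 < l2)
    (h : eta0 l0 l1 l2 ≤ |η|) : 0 < |η| - l1 / (2 * l2) := by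
  have h' := (eta0_le_iff hl2).1 h
  have ha0 : 0 < Real.sqrt (l0 * l2) := Real.sqrt_pos.2 (mul_pos hl0 hl2)
  have : l1 / (2 * l2) < |η| := by rw [div_lt_iff₀ (by linarith)]; nlinarith
  linarith

lemma tstar_abs {l0 l1 l2 η : ℝ} (hl0 : 0 < l0) (hl1 : 0 ≤ l1) (hl2 : 0 < l2)
    (h : eta0 l0 l1 l2 ≤ |η|) :
    |Real.sign η * (|η| - l1 / (2 * l2))| = |η| - l1 / (2 * l2) := by
  have hu := u_pos hl0 hl1 hl2 h
  rcases sign_cases (eta_ne_zero hl0 hl1 hl2 h) with hs | hs <;> rw [hs]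
  · rw [one_mul, abs_of_pos hu]
  · rw [neg_one_mul, abs_neg, abs_of_pos hu]

lemma tstar_ne_zero {l0 l1 l2 η : ℝ} (hl0 : 0 < l0) (hl1 : 0 ≤ l1) (hl2 : 0 < l2)
    (h : eta0 l0 l1 l2 ≤ |η|) :
    Real.sign η * (|η| - l1 / (2 * l2)) ≠ 0 := by
  intro h0
  have := tstar_abs hl0 hl1 hl2 h
  rw [h0, abs_zero] at this
  have := u_pos hl0 hl1 hl2 h
  linarith

lemma gfun_at_tstar {l0 l1 l2 η : ℝ} (hl0 : 0 < l0) (hl1 : 0 ≤ l1) (hl2 : 0 < l2)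
    (h : eta0 l0 l1 l2 ≤ |η|) :
    gfun l0 l1 l2 η (Real.sign η * (|η| - l1 / (2 * l2)))
      = l0 - l2 * (|η| - l1 / (2 * l2))^2 := by
  have hne := tstar_ne_zero hl0 hl1 hl2 h
  have hl2' : (2 : ℝ) * l2 ≠ 0 := by positivity
  rw [gfun, if_neg hne, tstar_abs hl0 hl1 hl2 h]
  rcases lt_trichotomy η 0 with hn | hz | hp
  · rw [Real.sign_of_neg hn, abs_of_neg hn]; field_simp; ring
  · exact absurd hz (eta_ne_zero hl0 hl1 hl2 h)
  · rw [Real.sign_of_pos hp, abs_of_pos hp]; field_simp; ring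

-- Bth is a global minimizer of gfun
lemma bth_min {l0 l1 l2 : ℝ} (hl0 : 0 < l0) (hl1 : 0 ≤ l1) (hl2 : 0 < l2) (η s : ℝ) :
    gfun l0 l1 l2 η (Bth l0 l1 l2 η) ≤ gfun l0 l1 l2 η s := by
  have ha0 : 0 < Real.sqrt (l0 * l2) := Real.sqrt_pos.2 (mul_pos hl0 hl2)
  have ha2 : (Real.sqrt (l0 * l2))^2 = l0 * l2 := Real.sq_sqrt (by positivity)
  have hηs : η * s ≤ |η| * |s| := by
    calc η * s ≤ |η * s| := le_abs_self _
    _ = |η| * |s| := abs_mul _ _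
  rw [Bth]
  by_cases h : eta0 l0 l1 l2 ≤ |η|
  · rw [if_pos h, gfun_at_tstar hl0 hl1 hl2 h]
    have h' : 2 * Real.sqrt (l0 * l2) + l1 ≤ 2 * l2 * |η| := (eta0_le_iff hl2).1 h
    have hl2u : 2 * l2 * (|η| - l1 / (2 * l2)) = 2 * l2 * |η| - l1 := by
      field_simp
    have hl0u : l0 ≤ l2 * (|η| - l1 / (2 * l2))^2 := by
      nlinarith [sq_nonneg (l2 * (|η| - l1 / (2 * l2)) - Real.sqrt (l0 * l2))]
    by_cases hs : s = 0
    · rw [hs, gfun_zero]; linarith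
    · rw [gfun, if_neg hs]
      obtain ⟨u, hu⟩ : ∃ u, |η| - l1 / (2 * l2) = u := ⟨_, rfl⟩
      rw [hu] at hl2u hl0u ⊢
      have hF3 : 2 * l2 * u * |s| = (2 * l2 * |η| - l1) * |s| := by rw [hl2u]
      nlinarith [sq_abs s, mul_le_mul_of_nonneg_left hηs (by linarith : (0:ℝ) ≤ 2 * l2),
        mul_nonneg hl2.le (sq_nonneg (|s| - u)), hF3]
  · rw [if_neg h, gfun_zero]
    by_cases hs : s = 0
    · rw [hs, gfun_zero]
    · rw [gfun, if_neg hs]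
      have h' : 2 * l2 * |η| < 2 * Real.sqrt (l0 * l2) + l1 := (lt_eta0_iff hl2).1 (lt_of_not_ge h)
      have hs0 : 0 < |s| := abs_pos.2 hs
      have key : 0 ≤ l2 * |s|^2 - 2 * Real.sqrt (l0 * l2) * |s| + l0 := by
        nlinarith [sq_nonneg (l2 * |s| - Real.sqrt (l0 * l2))]
      have hmul : 2 * l2 * |η| * |s| ≤ (2 * Real.sqrt (l0 * l2) + l1) * |s| :=
        mul_le_mul_of_nonneg_right h'.le (abs_nonneg s)
      nlinarith [sq_abs s, mul_le_mul_of_nonneg_left hηs (by linarith : (0:ℝ) ≤ 2 * l2)]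

lemma forced_tstar {l0 l1 l2 η t : ℝ} (hl0 : 0 < l0) (hl1 : 0 ≤ l1) (hl2 : 0 < l2)
    (h : eta0 l0 l1 l2 ≤ |η|) (ht : t ≠ 0)
    (hle : gfun l0 l1 l2 η t ≤ l0 - l2 * (|η| - l1 / (2 * l2))^2) :
    t = Real.sign η * (|η| - l1 / (2 * l2)) := by
  have hu0 := u_pos hl0 hl1 hl2 h
  have hηt : η * t ≤ |η| * |t| := by
    calc η * t ≤ |η * t| := le_abs_self _
    _ = |η| * |t| := abs_mul _ _
  have hl2u : 2 * l2 * (|η| - l1 / (2 * l2)) = 2 * l2 * |η| - l1 := by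
    field_simp
  rw [gfun, if_neg ht] at hle
  obtain ⟨u, hu⟩ : ∃ u, |η| - l1 / (2 * l2) = u := ⟨_, rfl⟩
  rw [hu] at hl2u hle hu0 ⊢
  -- main : l2 t² - 2 l2 η t + l1 |t| + l2 u² ≤ 0
  have main : l2 * t^2 - 2 * l2 * η * t + l1 * |t| + l2 * u^2 ≤ 0 := by linarith
  have hF3 : 2 * l2 * u * |t| = (2 * l2 * |η| - l1) * |t| := by rw [hl2u]
  have hsq : l2 * (|t| - u)^2 ≤ 0 := by
    nlinarith [sq_abs t, mul_le_mul_of_nonneg_left hηt (by linarith : (0:ℝ) ≤ 2 * l2)]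
  have habs : |t| = u := by
    have h1 : (|t| - u)^2 ≤ 0 := by nlinarith
    have h2 : (|t| - u)^2 = 0 := le_antisymm h1 (sq_nonneg _)
    have := pow_eq_zero_iff (n := 2) (by norm_num) |>.1 h2
    linarith [sub_eq_zero.1 this]
  have heq : η * t = |η| * |t| := by
    have h2 : 2 * l2 * (|η| * |t| - η * t) ≤ 0 := by
      nlinarith [sq_abs t, sq_nonneg (|t| - u)]
    nlinarith
  have hη : η ≠ 0 := eta_ne_zero hl0 hl1 hl2 h
  have htpos : 0 < |η| * |t| := by
    rw [habs]; exact mul_pos (abs_pos.2 hη) hu0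
  rcases lt_trichotomy η 0 with hn | hz | hp
  · rw [Real.sign_of_neg hn, neg_one_mul]
    have hηt0 : 0 < η * t := by rw [heq]; exact htpos
    have ht0 : t < 0 := by
      rcases lt_trichotomy t 0 with h | h | h
      · exact h
      · exfalso; rw [h, mul_zero] at hηt0; linarith
      · exfalso; nlinarith
    rw [abs_of_neg ht0] at habs; linarith
  · exact absurd hz hη
  · rw [Real.sign_of_pos hp, one_mul]
    have hηt0 : 0 < η * t := by rw [heq]; exact htpos
    have ht0 : 0 < t := by
      rcases lt_trichotomy t 0 with h | h | h
      · exfalso; nlinarith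
      · exfalso; rw [h, mul_zero] at hηt0; linarith
      · exact h
    rw [abs_of_pos ht0] at habs; linarith

lemma min_char {l0 l1 l2 η t : ℝ} (hl0 : 0 < l0) (hl1 : 0 ≤ l1) (hl2 : 0 < l2)
    (hmin : ∀ s, gfun l0 l1 l2 η t ≤ gfun l0 l1 l2 η s) :
    (eta0 l0 l1 l2 < |η| → t = Real.sign η * (|η| - l1 / (2 * l2))) ∧
    (|η| < eta0 l0 l1 l2 → t = 0) ∧
    (|η| = eta0 l0 l1 l2 →
      t = 0 ∨ t = Real.sign η * (|η| - l1 / (2 * l2))) := by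
  have ha0 : 0 < Real.sqrt (l0 * l2) := Real.sqrt_pos.2 (mul_pos hl0 hl2)
  have ha2 : (Real.sqrt (l0 * l2))^2 = l0 * l2 := Real.sq_sqrt (by positivity)
  refine ⟨?_, ?_, ?_⟩
  · intro h
    have h' : eta0 l0 l1 l2 ≤ |η| := h.le
    have hstrict : 2 * Real.sqrt (l0 * l2) + l1 < 2 * l2 * |η| := by
      rw [eta0, div_lt_iff₀ (by linarith)] at h; nlinarith
    have hl2u : 2 * l2 * (|η| - l1 / (2 * l2)) = 2 * l2 * |η| - l1 := by
      field_simp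
    have hval : l0 - l2 * (|η| - l1 / (2 * l2))^2 < 0 := by
      obtain ⟨u, hu⟩ : ∃ u, |η| - l1 / (2 * l2) = u := ⟨_, rfl⟩
      rw [hu] at hl2u ⊢
      nlinarith [sq_nonneg (l2 * u - Real.sqrt (l0 * l2))]
    have hle : gfun l0 l1 l2 η t ≤ l0 - l2 * (|η| - l1 / (2 * l2))^2 := by
      calc gfun l0 l1 l2 η t ≤ gfun l0 l1 l2 η (Real.sign η * (|η| - l1 / (2 * l2))) :=
            hmin _
      _ = _ := gfun_at_tstar hl0 hl1 hl2 h'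
    have ht : t ≠ 0 := by
      intro h0; rw [h0, gfun_zero] at hle; linarith
    exact forced_tstar hl0 hl1 hl2 h' ht hle
  · intro h
    by_contra ht
    have hle : gfun l0 l1 l2 η t ≤ 0 := by
      have := hmin 0; rwa [gfun_zero] at this
    rw [gfun, if_neg ht] at hle
    have h' : 2 * l2 * |η| < 2 * Real.sqrt (l0 * l2) + l1 := (lt_eta0_iff hl2).1 h
    have hs0 : 0 < |t| := abs_pos.2 ht
    have hηt : η * t ≤ |η| * |t| := by
      calc η * t ≤ |η * t| := le_abs_self _
      _ = |η| * |t| := abs_mul _ _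
    have key : 0 ≤ l2 * |t|^2 - 2 * Real.sqrt (l0 * l2) * |t| + l0 := by
      nlinarith [sq_nonneg (l2 * |t| - Real.sqrt (l0 * l2))]
    have hmul : 2 * l2 * |η| * |t| < (2 * Real.sqrt (l0 * l2) + l1) * |t| :=
      mul_lt_mul_of_pos_right h' hs0
    nlinarith [sq_abs t, mul_le_mul_of_nonneg_left hηt (by linarith : (0:ℝ) ≤ 2 * l2)]
  · intro h
    by_cases ht : t = 0
    · exact Or.inl ht
    right
    have h' : eta0 l0 l1 l2 ≤ |η| := le_of_eq h.symm
    have heq : 2 * Real.sqrt (l0 * l2) + l1 = 2 * l2 * |η| := by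
      rw [h, eta0]; field_simp
    have hval : l0 - l2 * (|η| - l1 / (2 * l2))^2 = 0 := by
      have hl2u : 2 * l2 * (|η| - l1 / (2 * l2)) = 2 * l2 * |η| - l1 := by
        field_simp
      obtain ⟨u, hu⟩ : ∃ u, |η| - l1 / (2 * l2) = u := ⟨_, rfl⟩
      rw [hu] at hl2u ⊢
      nlinarith [sq_nonneg (l2 * u - Real.sqrt (l0 * l2)), sq_nonneg (l2 * u + Real.sqrt (l0 * l2))]
    have hle : gfun l0 l1 l2 η t ≤ l0 - l2 * (|η| - l1 / (2 * l2))^2 := by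
      rw [hval]
      have := hmin 0; rwa [gfun_zero] at this
    exact forced_tstar hl0 hl1 hl2 h' ht hle

-- converse: the characterization implies minimality
lemma char_min {l0 l1 l2 η t : ℝ} (hl0 : 0 < l0) (hl1 : 0 ≤ l1) (hl2 : 0 < l2)
    (h1 : eta0 l0 l1 l2 < |η| → t = Real.sign η * (|η| - l1 / (2 * l2)))
    (h2 : |η| < eta0 l0 l1 l2 → t = 0)
    (h3 : |η| = eta0 l0 l1 l2 →
      t = 0 ∨ t = Real.sign η * (|η| - l1 / (2 * l2))) :
    ∀ s, gfun l0 l1 l2 η t ≤ gfun l0 l1 l2 η s := by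
  intro s
  rcases lt_trichotomy (|η|) (eta0 l0 l1 l2) with hc | hc | hc
  · rw [h2 hc]
    have hb : Bth l0 l1 l2 η = 0 := by rw [Bth, if_neg (not_le.2 hc)]
    have := bth_min hl0 hl1 hl2 η s; rwa [hb] at this
  · rcases h3 hc with h0 | hts
    · rw [h0, gfun_zero]
      have hval : gfun l0 l1 l2 η (Real.sign η * (|η| - l1 / (2 * l2)))
          = l0 - l2 * (|η| - l1 / (2 * l2))^2 := gfun_at_tstar hl0 hl1 hl2 (le_of_eq hc.symm)
      have hzero : l0 - l2 * (|η| - l1 / (2 * l2))^2 = 0 := by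
        have heq : 2 * Real.sqrt (l0 * l2) + l1 = 2 * l2 * |η| := by
          rw [hc, eta0]; field_simp
        have hl2u : 2 * l2 * (|η| - l1 / (2 * l2)) = 2 * l2 * |η| - l1 := by
          field_simp
        have ha2 : (Real.sqrt (l0 * l2))^2 = l0 * l2 := Real.sq_sqrt (by positivity)
        obtain ⟨u, hu⟩ : ∃ u, |η| - l1 / (2 * l2) = u := ⟨_, rfl⟩
        rw [hu] at hl2u ⊢
        have hlu : l2 * u = Real.sqrt (l0 * l2) := by linarith
        have h2 : l2 * (l2 * u^2) = l2 * l0 := by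
          linear_combination (l2 * u + Real.sqrt (l0 * l2)) * hlu + ha2
        have := mul_left_cancel₀ hl2.ne' h2
        linarith
      have hb : Bth l0 l1 l2 η = Real.sign η * (|η| - l1 / (2 * l2)) := by
        rw [Bth, if_pos (le_of_eq hc.symm)]
      have := bth_min hl0 hl1 hl2 η s
      rw [hb, hval, hzero] at this
      linarith
    · rw [hts]
      have hb : Bth l0 l1 l2 η = Real.sign η * (|η| - l1 / (2 * l2)) := by
        rw [Bth, if_pos (le_of_eq hc.symm)]
      have := bth_min hl0 hl1 hl2 η s; rwa [hb] at this
  · rw [h1 hc]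
    have hb : Bth l0 l1 l2 η = Real.sign η * (|η| - l1 / (2 * l2)) := by
      rw [Bth, if_pos hc.le]
    have := bth_min hl0 hl1 hl2 η s; rwa [hb] at this

lemma norm_sq_eq {p : ℕ} (β : EuclideanSpace ℝ (Fin p)) : ‖β‖^2 = ∑ j, (β j)^2 := by
  rw [EuclideanSpace.norm_sq_eq]
  simp [Real.norm_eq_abs, sq_abs]

lemma zeroNorm_eq {p : ℕ} (β : EuclideanSpace ℝ (Fin p)) :
    zeroNorm β = ∑ j, (if β j = 0 then (0:ℝ) else 1) := by
  rw [zeroNorm, Finset.card_filter]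
  push_cast
  exact Finset.sum_congr rfl fun j _ => by split_ifs with h <;> simp_all

lemma inner_Xmul {n p : ℕ} (x : Fin p → EuclideanSpace ℝ (Fin n))
    (β : EuclideanSpace ℝ (Fin p)) (α : EuclideanSpace ℝ (Fin n)) :
    (inner ℝ α (Xmul x β) : ℝ) = ∑ j, β j * (inner ℝ (x j) α : ℝ) := by
  rw [Xmul, inner_sum]
  exact Finset.sum_congr rfl fun j _ => by rw [real_inner_smul_right, real_inner_comm]

lemma sum_gfun {n p : ℕ} {l0 l1 l2 : ℝ} (hl2 : 0 < l2)
    (x : Fin p → EuclideanSpace ℝ (Fin n))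
    (β : EuclideanSpace ℝ (Fin p)) (α : EuclideanSpace ℝ (Fin n)) :
    ∑ j, gfun l0 l1 l2 (etav x l2 α j) (β j)
      = (inner ℝ α (Xmul x β) : ℝ) + l0 * zeroNorm β + l1 * oneNorm β + l2 * ‖β‖^2 := by
  rw [inner_Xmul, norm_sq_eq, zeroNorm_eq, oneNorm, Finset.mul_sum, Finset.mul_sum,
    Finset.mul_sum, ← Finset.sum_add_distrib, ← Finset.sum_add_distrib,
    ← Finset.sum_add_distrib]
  refine Finset.sum_congr rfl fun j _ => ?_
  have h : (inner ℝ (x j) α : ℝ) = -(2 * l2) * etav x l2 α j := by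
    rw [etav]; field_simp
  rw [gfun, h]
  split_ifs with hb <;> ring

lemma Lag_eq {n p : ℕ} {l0 l1 l2 : ℝ} (hl2 : 0 < l2)
    (x : Fin p → EuclideanSpace ℝ (Fin n)) (y : EuclideanSpace ℝ (Fin n))
    (β : EuclideanSpace ℝ (Fin p)) (α : EuclideanSpace ℝ (Fin n)) :
    Lag x y l0 l1 l2 β α = -(1/2) * ‖α‖^2 - (inner ℝ y α : ℝ)
      + ∑ j, gfun l0 l1 l2 (etav x l2 α j) (β j) := by
  rw [Lag, sum_gfun hl2]; ring

lemma lag_form {n p : ℕ} (x : Fin p → EuclideanSpace ℝ (Fin n)) (y : EuclideanSpace ℝ (Fin n))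
    (l0 l1 l2 : ℝ) (β : EuclideanSpace ℝ (Fin p)) (α : EuclideanSpace ℝ (Fin n)) :
    Lag x y l0 l1 l2 β α = (1/2) * ‖Xmul x β - y‖^2 - (1/2) * ‖α - (Xmul x β - y)‖^2
      + (l0 * zeroNorm β + l1 * oneNorm β + l2 * ‖β‖^2) := by
  rw [Lag, norm_sub_sq_real α (Xmul x β - y)]
  have hv : (inner ℝ α (Xmul x β - y) : ℝ) = (inner ℝ α (Xmul x β) : ℝ) - (inner ℝ y α : ℝ) := by
    rw [inner_sub_right, real_inner_comm y α]
  rw [hv]; ring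

lemma beta_side_iff {n p : ℕ} {l0 l1 l2 : ℝ} (hl2 : 0 < l2)
    (x : Fin p → EuclideanSpace ℝ (Fin n)) (y : EuclideanSpace ℝ (Fin n))
    (βb : EuclideanSpace ℝ (Fin p)) (αb : EuclideanSpace ℝ (Fin n)) :
    (∀ β, Lag x y l0 l1 l2 βb αb ≤ Lag x y l0 l1 l2 β αb) ↔
    (∀ j t, gfun l0 l1 l2 (etav x l2 αb j) (βb j) ≤ gfun l0 l1 l2 (etav x l2 αb j) t) := by
  constructor
  · intro h j t
    have hh := h (WithLp.toLp 2 (fun j' => if j' = j then t else βb j'))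
    simp only [WithLp.ofLp_toLp] at hh
    rw [Lag_eq hl2, Lag_eq hl2] at hh
    have split : ∀ (c : Fin p → ℝ),
        ∑ j', gfun l0 l1 l2 (etav x l2 αb j') (c j')
          = gfun l0 l1 l2 (etav x l2 αb j) (c j)
            + ∑ j' ∈ Finset.univ.erase j, gfun l0 l1 l2 (etav x l2 αb j') (c j') :=
      fun c => (Finset.add_sum_erase _ (fun j' => gfun l0 l1 l2 (etav x l2 αb j') (c j'))
        (Finset.mem_univ j)).symm
    rw [split βb, split (fun j' => if j' = j then t else βb j')] at hh
    simp only [eq_self_iff_true, if_true] at hh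
    have herase : ∑ j' ∈ Finset.univ.erase j,
        gfun l0 l1 l2 (etav x l2 αb j') (if j' = j then t else βb j')
        = ∑ j' ∈ Finset.univ.erase j, gfun l0 l1 l2 (etav x l2 αb j') (βb j') := by
      refine Finset.sum_congr rfl fun j' hj' => ?_
      rw [if_neg (Finset.ne_of_mem_erase hj')]
    rw [herase] at hh
    linarith
  · intro h β
    rw [Lag_eq hl2, Lag_eq hl2]
    have : ∑ j, gfun l0 l1 l2 (etav x l2 αb j) (βb j)
        ≤ ∑ j, gfun l0 l1 l2 (etav x l2 αb j) (β j) :=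
      Finset.sum_le_sum fun j _ => h j (β j)
    linarith

lemma alpha_side_iff {n p : ℕ} (x : Fin p → EuclideanSpace ℝ (Fin n))
    (y : EuclideanSpace ℝ (Fin n)) (l0 l1 l2 : ℝ)
    (βb : EuclideanSpace ℝ (Fin p)) (αb : EuclideanSpace ℝ (Fin n)) :
    (∀ α, Lag x y l0 l1 l2 βb α ≤ Lag x y l0 l1 l2 βb αb) ↔ αb = Xmul x βb - y := by
  constructor
  · intro h
    have hh := h (Xmul x βb - y)
    rw [lag_form, lag_form] at hh
    simp only [sub_self, norm_zero] at hh
    have h2 : ‖αb - (Xmul x βb - y)‖^2 ≤ 0 := by nlinarith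
    have h3 : ‖αb - (Xmul x βb - y)‖ = 0 := by
      nlinarith [norm_nonneg (αb - (Xmul x βb - y))]
    rw [norm_eq_zero, sub_eq_zero] at h3
    exact h3
  · intro h α
    rw [lag_form, lag_form, ← h]
    simp only [sub_self, norm_zero]
    nlinarith [sq_nonneg ‖α - (Xmul x βb - y)‖]

lemma lag_le_pobj {n p : ℕ} (x : Fin p → EuclideanSpace ℝ (Fin n))
    (y : EuclideanSpace ℝ (Fin n)) (l0 l1 l2 : ℝ)
    (β : EuclideanSpace ℝ (Fin p)) (α : EuclideanSpace ℝ (Fin n)) :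
    Lag x y l0 l1 l2 β α ≤ Pobj x y l0 l1 l2 β := by
  rw [lag_form, Pobj, norm_sub_rev y (Xmul x β)]
  nlinarith [sq_nonneg ‖α - (Xmul x β - y)‖]

lemma lag_at_v {n p : ℕ} (x : Fin p → EuclideanSpace ℝ (Fin n))
    (y : EuclideanSpace ℝ (Fin n)) (l0 l1 l2 : ℝ)
    (β : EuclideanSpace ℝ (Fin p)) :
    Lag x y l0 l1 l2 β (Xmul x β - y) = Pobj x y l0 l1 l2 β := by
  rw [lag_form, Pobj, norm_sub_rev y (Xmul x β)]
  simp only [sub_self, norm_zero]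
  ring


/-- saddle point characterization. -/
theorem stmt7 (n p : ℕ) (x : Fin p → EuclideanSpace ℝ (Fin n))
    (y : EuclideanSpace ℝ (Fin n)) (l0 l1 l2 : ℝ)
    (hl0 : 0 < l0) (hl1 : 0 ≤ l1) (hl2 : 0 < l2)
    (βb : EuclideanSpace ℝ (Fin p)) (αb : EuclideanSpace ℝ (Fin n)) :
    IsSaddle x y l0 l1 l2 βb αb ↔
      ((∀ β : EuclideanSpace ℝ (Fin p), Pobj x y l0 l1 l2 βb ≤ Pobj x y l0 l1 l2 β) ∧
       αb = Xmul x βb - y ∧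
       ∀ j : Fin p,
         (eta0 l0 l1 l2 < |etav x l2 αb j| →
            βb j = Real.sign (etav x l2 αb j) * (|etav x l2 αb j| - l1 / (2 * l2))) ∧
         (|etav x l2 αb j| < eta0 l0 l1 l2 → βb j = 0) ∧
         (|etav x l2 αb j| = eta0 l0 l1 l2 →
            βb j = 0 ∨
            βb j = Real.sign (etav x l2 αb j) * (|etav x l2 αb j| - l1 / (2 * l2)))) := by
  constructor
  · rintro ⟨hα, hβ⟩
    have hb : αb = Xmul x βb - y := (alpha_side_iff x y l0 l1 l2 βb αb).1 hα
    have hmin := (beta_side_iff hl2 x y βb αb).1 hβ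
    refine ⟨?_, hb, fun j => min_char hl0 hl1 hl2 (hmin j)⟩
    intro β
    have h1 : Pobj x y l0 l1 l2 βb = Lag x y l0 l1 l2 βb αb := by
      rw [hb, lag_at_v]
    rw [h1]
    exact le_trans (hβ β) (lag_le_pobj x y l0 l1 l2 β αb)
  · rintro ⟨ha, hb, hc⟩
    exact ⟨(alpha_side_iff x y l0 l1 l2 βb αb).2 hb,
      (beta_side_iff hl2 x y βb αb).2 fun j =>
        char_min hl0 hl1 hl2 (hc j).1 (hc j).2.1 (hc j).2.2⟩
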